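/- Let V ⊆ ℝ^n be a regular space with distinguished index r, let c : E\{r} → ℝ₊ be a capacity, and let f ∈ V be a feasible flow (0 ≤ f_j ≤ c_j for j ≠ r). Then f maximizes f_r among feasible flows if and only if there is no augmenting r-path for f. -/

import Mathlib

open Finset

variable {n : ℕ}

/-- The support of a vector. -/
def supp (x : Fin n → ℝ) : Set (Fin n) := {j | x j ≠ 0}

/-- A nonzero vector of `V` is elementary if no nonzero vector of `V` has support
properly contained in its support. -/
def IsElementary (V : Submodule ℝ (Fin n → ℝ)) (x : Fin n → ℝ) : Prop :=
  x ∈ V ∧ x ≠ 0 ∧ ∀ y ∈ V, y ≠ 0 → ¬ (supp y ⊂ supp x)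

/-- A primitive vector: elementary with entries in `{-1, 0, 1}`. -/
def IsPrimitive (V : Submodule ℝ (Fin n → ℝ)) (x : Fin n → ℝ) : Prop :=
  IsElementary V x ∧ ∀ j, x j ∈ ({-1, 0, 1} : Set ℝ)

/-- `y` conforms to `x`. -/
def Conforms (y x : Fin n → ℝ) : Prop := ∀ j, y j ≠ 0 → y j * x j > 0

/-- A regular space: the kernel of a totally unimodular matrix. -/
def IsRegularSpace (V : Submodule ℝ (Fin n → ℝ)) : Prop :=
  ∃ (m : ℕ) (A : Matrix (Fin m) (Fin n) ℝ),
    A.IsTotallyUnimodular ∧ V = LinearMap.ker A.mulVecLin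

/-- An `r`-path: a primitive vector with value `+1` at `r`. -/
def IsRPath (V : Submodule ℝ (Fin n → ℝ)) (r : Fin n) (P : Fin n → ℝ) : Prop :=
  IsPrimitive V P ∧ P r = 1

/-- Feasibility with respect to capacity `c` (no constraint at `r`). -/
def Feasible (c : Fin n → ℝ) (r : Fin n) (f : Fin n → ℝ) : Prop :=
  ∀ j, j ≠ r → 0 ≤ f j ∧ f j ≤ c j

/-- An `r`-path `P` is augmenting for the flow `f`. -/
def Augmenting (V : Submodule ℝ (Fin n → ℝ)) (c : Fin n → ℝ) (r : Fin n)
    (f P : Fin n → ℝ) : Prop :=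
  IsRPath V r P ∧ ∃ ε : ℝ, 0 < ε ∧ Feasible c r (f + ε • P)

/-- The 1-norm. -/
def onorm (x : Fin n → ℝ) : ℝ := ∑ j, |x j|

/-- A shortest augmenting `r`-path. -/
def ShortestAug (V : Submodule ℝ (Fin n → ℝ)) (c : Fin n → ℝ) (r : Fin n)
    (f P : Fin n → ℝ) : Prop :=
  Augmenting V c r f P ∧ ∀ Q, Augmenting V c r f Q → onorm P ≤ onorm Q

/-- `g` is obtained from `f` by maximal augmentation along `P`. -/
def MaxAug (c : Fin n → ℝ) (r : Fin n) (f P g : Fin n → ℝ) : Prop :=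
  ∃ ε : ℝ, 0 < ε ∧ g = f + ε • P ∧ Feasible c r g ∧
    ∀ ε' : ℝ, ε < ε' → ¬ Feasible c r (f + ε' • P)

/-- A conformal primitive decomposition of `P + Q` in which `M` and `J` are the two
`r`-path summands (`M` playing the role of `P ∧ Q` and `J` of `P ∨ Q`). -/
def MeetJoinDecomp (V : Submodule ℝ (Fin n → ℝ)) (r : Fin n)
    (P Q M J : Fin n → ℝ) : Prop :=
  ∃ (k : ℕ) (p : Fin k → Fin n → ℝ) (a b : Fin k),
    (∀ i, IsPrimitive V (p i)) ∧ (∀ i, Conforms (p i) (P + Q)) ∧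
    (∑ i, p i) = P + Q ∧ a ≠ b ∧ p a = M ∧ p b = J ∧
    p a r = 1 ∧ p b r = 1 ∧ ∀ i, p i r = 1 → i = a ∨ i = b

section AuxiliaryLemmas

-- auxiliary
noncomputable def suppF (x : Fin n → ℝ) : Finset (Fin n) := Finset.univ.filter (fun j => x j ≠ 0)

lemma mem_suppF {x : Fin n → ℝ} {j : Fin n} : j ∈ suppF x ↔ x j ≠ 0 := by
  simp [suppF]

lemma suppF_coe (x : Fin n → ℝ) : (suppF x : Set (Fin n)) = supp x := by
  ext j; simp [suppF, supp]

lemma sign_trans {a b c : ℝ} (h1 : 0 < a * b) (h2 : 0 < b * c) : 0 < a * c := by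
  rcases mul_pos_iff.mp h1 with ⟨ha, hb⟩ | ⟨ha, hb⟩
  · rcases mul_pos_iff.mp h2 with ⟨_, hc⟩ | ⟨hb', _⟩
    · exact mul_pos ha hc
    · linarith
  · rcases mul_pos_iff.mp h2 with ⟨hb', _⟩ | ⟨_, hc⟩
    · linarith
    · exact mul_pos_of_neg_of_neg ha hc

lemma reduce {V : Submodule ℝ (Fin n → ℝ)} {g z u : Fin n → ℝ} {r : Fin n}
    (hzV : z ∈ V) (hzg : Conforms z g) (hzr : 0 < z r)
    (huV : u ∈ V) (hsupp : ∀ j, u j ≠ 0 → z j ≠ 0) (hur : u r ≤ 0)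
    {j₁ : Fin n} (hj₁ : 0 < u j₁ * z j₁) :
    ∃ z', z' ∈ V ∧ Conforms z' g ∧ 0 < z' r ∧ suppF z' ⊂ suppF z := by
  classical
  set AF : Finset (Fin n) := Finset.univ.filter (fun j => 0 < u j * z j) with hAF
  have hne : AF.Nonempty := ⟨j₁, by simp [hAF, hj₁]⟩
  have hmemA : ∀ j ∈ AF, 0 < u j * z j := fun j hj => by
    simpa [hAF] using hj
  set t : ℝ := AF.inf' hne (fun j => z j / u j) with ht
  have htpos : 0 < t := by
    rw [ht, Finset.lt_inf'_iff]
    intro j hj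
    rcases mul_pos_iff.mp (hmemA j hj) with ⟨h1, h2⟩ | ⟨h1, h2⟩
    · exact div_pos h2 h1
    · exact div_pos_of_neg_of_neg h2 h1
  obtain ⟨j₂, hj₂A, hj₂⟩ := Finset.exists_mem_eq_inf' hne (fun j => z j / u j)
  have huj₂ : u j₂ ≠ 0 := by
    intro h
    have := hmemA j₂ hj₂A
    rw [h] at this; simp at this
  set z' : Fin n → ℝ := z - t • u with hz'
  have hz'j : ∀ j, z' j = z j - t * u j := fun j => rfl
  have hz'V : z' ∈ V := V.sub_mem hzV (V.smul_mem t huV)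
  have hz'r : 0 < z' r := by
    have h1 : t * u r ≤ 0 := mul_nonpos_of_nonneg_of_nonpos htpos.le hur
    have := hz'j r
    rw [this]; linarith
  have hkey : ∀ j, u j ≠ 0 → z' j ≠ 0 → 0 < z' j * z j := by
    intro j hu hz'0
    have hzj : z j ≠ 0 := hsupp j hu
    by_cases hA : j ∈ AF
    · have hle : t ≤ z j / u j := by rw [ht]; exact Finset.inf'_le _ hA
      have h0 : 0 < u j * z j := hmemA j hA
      have hform : z' j = u j * (z j / u j - t) := by
        rw [hz'j]; field_simp
      have hne0 : z j / u j - t ≠ 0 := by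
        intro h
        rw [hform, h, mul_zero] at hz'0
        exact hz'0 rfl
      have hgt : 0 < z j / u j - t := lt_of_le_of_ne (by linarith) (Ne.symm hne0)
      rw [hform]
      calc (0:ℝ) < (u j * z j) * (z j / u j - t) := mul_pos h0 hgt
        _ = u j * (z j / u j - t) * z j := by ring
    · have hne2 : u j * z j ≠ 0 := mul_ne_zero hu hzj
      have hlt : u j * z j < 0 := by
        rcases lt_or_gt_of_ne hne2 with h | h
        · exact h
        · exact absurd (by simp [hAF, h]) hA
      rw [hz'j]
      nlinarith [mul_self_pos.mpr hzj]
  refine ⟨z', hz'V, ?_, hz'r, ?_⟩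
  · intro j hz'0
    by_cases hu : u j = 0
    · have hzz : z' j = z j := by rw [hz'j, hu]; ring
      rw [hzz] at hz'0 ⊢
      exact hzg j hz'0
    · exact sign_trans (hkey j hu hz'0) (hzg j (hsupp j hu))
  · have hsub : suppF z' ⊆ suppF z := by
      intro j hj
      rw [mem_suppF] at hj ⊢
      intro hzj
      apply hj
      have hu : u j = 0 := by
        by_contra h
        exact (hsupp j h) hzj
      rw [hz'j, hzj, hu]; ring
    rw [Finset.ssubset_iff_of_subset hsub]
    refine ⟨j₂, mem_suppF.mpr (hsupp j₂ huj₂), ?_⟩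
    rw [mem_suppF]
    intro h
    apply h
    rw [hz'j, ht, hj₂]
    field_simp
    ring

lemma exists_elementary_conforms {V : Submodule ℝ (Fin n → ℝ)} {g : Fin n → ℝ} {r : Fin n}
    (hg : g ∈ V) (hr : 0 < g r) :
    ∃ z, IsElementary V z ∧ Conforms z g ∧ 0 < z r := by
  classical
  set T : (Fin n → ℝ) → Prop := fun z => z ∈ V ∧ Conforms z g ∧ 0 < z r with hT
  have hTg : T g := ⟨hg, fun j hj => mul_self_pos.mpr hj, hr⟩
  have hex : ∃ N, ∃ z, T z ∧ (suppF z).card = N := ⟨_, g, hTg, rfl⟩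
  obtain ⟨z, hzT, hzcard⟩ := Nat.find_spec hex
  have hmin : ∀ z', T z' → (suppF z).card ≤ (suppF z').card := by
    intro z' h
    rw [hzcard]
    exact Nat.find_min' hex ⟨z', h, rfl⟩
  obtain ⟨hzV, hzg, hzr⟩ := hzT
  refine ⟨z, ⟨hzV, fun h0 => by simp [h0] at hzr, ?_⟩, hzg, hzr⟩
  intro w hwV hw0 hss
  rw [← suppF_coe, ← suppF_coe, Finset.coe_ssubset] at hss
  have hwsub : ∀ j, w j ≠ 0 → z j ≠ 0 := fun j hj =>
    mem_suppF.mp (hss.1 (mem_suppF.mpr hj))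
  -- applying `reduce` leads to a contradiction
  have hred : ∀ u : Fin n → ℝ, u ∈ V → (∀ j, u j ≠ 0 → z j ≠ 0) → u r ≤ 0 →
      ∀ j₁, 0 < u j₁ * z j₁ → False := by
    intro u huV husupp hur j₁ hj₁
    obtain ⟨z', hz'V, hz'g, hz'r, hz'ss⟩ := reduce hzV hzg hzr huV husupp hur hj₁
    have h1 := hmin z' ⟨hz'V, hz'g, hz'r⟩
    have h2 := Finset.card_lt_card hz'ss
    omega
  by_cases hwr : w r = 0
  · obtain ⟨j₁, hj₁⟩ : ∃ j, w j ≠ 0 := by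
      by_contra h
      push_neg at h
      exact hw0 (funext fun j => h j)
    have hzj₁ := hwsub j₁ hj₁
    have hne2 : w j₁ * z j₁ ≠ 0 := mul_ne_zero hj₁ hzj₁
    rcases lt_or_gt_of_ne hne2 with h | h
    · exact hred (-w) (V.neg_mem hwV) (fun j hj => hwsub j (by simpa using hj))
        (by simp [hwr]) j₁ (by simpa using h)
    · exact hred w hwV hwsub (le_of_eq hwr) j₁ h
  · -- w r ≠ 0 : pick the sign `u` of `w` with `u r < 0`
    set u : Fin n → ℝ := if 0 < w r then -w else w with hu
    have huV : u ∈ V := by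
      rw [hu]; split_ifs
      · exact V.neg_mem hwV
      · exact hwV
    have husupp : ∀ j, u j ≠ 0 → z j ≠ 0 := by
      intro j hj
      apply hwsub j
      rw [hu] at hj
      split_ifs at hj
      · simpa using hj
      · exact hj
    have hur : u r < 0 := by
      rw [hu]; split_ifs with h
      · simpa using h
      · exact lt_of_le_of_ne (not_lt.mp h) hwr
    by_cases hA : ∃ j₁, 0 < u j₁ * z j₁
    · obtain ⟨j₁, hj₁⟩ := hA
      exact hred u huV husupp hur.le j₁ hj₁
    · push_neg at hA
      -- then `-u` conforms to `z`, hence lies in `T`, contradicting minimality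
      have hTnu : T (-u) := by
        refine ⟨V.neg_mem huV, ?_, by simpa using hur⟩
        intro j hj
        have huj : u j ≠ 0 := by simpa using hj
        have hzj : z j ≠ 0 := husupp j huj
        have hlt : u j * z j < 0 :=
          lt_of_le_of_ne (hA j) (mul_ne_zero huj hzj)
        have h1 : 0 < (-u j) * z j := by linarith
        have := sign_trans h1 (hzg j hzj)
        simpa using this
      have h1 := hmin (-u) hTnu
      have h2 : suppF (-u : Fin n → ℝ) = suppF w := by
        ext j
        rw [mem_suppF, mem_suppF, hu]
        split_ifs <;> simp
      rw [h2] at h1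
      have h3 := Finset.card_lt_card hss
      omega

lemma supp_smul_ne {β : ℝ} (hβ : β ≠ 0) (z : Fin n → ℝ) : supp (β • z) = supp z := by
  ext j
  simp [supp, hβ, mul_eq_zero, Pi.smul_apply]

lemma IsElementary.smul_elem {V : Submodule ℝ (Fin n → ℝ)} {z : Fin n → ℝ}
    (hz : IsElementary V z) {β : ℝ} (hβ : β ≠ 0) : IsElementary V (β • z) := by
  obtain ⟨hzV, hz0, hmin⟩ := hz
  refine ⟨V.smul_mem β hzV, smul_ne_zero hβ hz0, ?_⟩
  intro y hy hy0 hssub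
  exact hmin y hy hy0 (by rwa [supp_smul_ne hβ] at hssub)

lemma exists_rows {k m : ℕ} {v : Fin k → (Fin m → ℝ)} (hv : LinearIndependent ℝ v) :
    ∃ e : Fin k → Fin m, Function.Injective e ∧
      (Matrix.of fun i j => v j (e i) : Matrix (Fin k) (Fin k) ℝ).det ≠ 0 := by
  classical
  set B : Matrix (Fin m) (Fin k) ℝ := Matrix.of fun x i => v i x with hB
  have hBt : LinearIndependent ℝ (B.transpose : Matrix (Fin k) (Fin m) ℝ) := hv
  have h1 : B.transpose.rank = k := hBt.rank_matrix.trans (Fintype.card_fin k)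
  have h2 : B.transpose.rank = Module.finrank ℝ (Submodule.span ℝ (Set.range B)) := by
    rw [Matrix.rank_eq_finrank_span_cols]; rfl
  have hspan : Submodule.span ℝ (Set.range B) = ⊤ :=
    Submodule.eq_top_of_finrank_eq (by rw [← h2, h1, Module.finrank_fin_fun])
  obtain ⟨b, hbsub, hbspan, hbli⟩ := exists_linearIndependent ℝ (Set.range B)
  rw [hspan] at hbspan
  have hbfin : b.Finite := hbli.setFinite
  haveI : Fintype b := hbfin.fintype
  have hbasis : Module.Basis b ℝ (Fin k → ℝ) := Module.Basis.mk hbli (by rw [Subtype.range_coe, hbspan])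
  have hcard : Fintype.card b = k := by
    have h3 := Module.finrank_eq_card_basis hbasis
    rw [Module.finrank_fin_fun] at h3
    omega
  set ε : Fin k ≃ b := (Fintype.equivFinOfCardEq hcard).symm with hε
  have hchoice : ∀ x : b, ∃ i : Fin m, B i = (x : Fin k → ℝ) :=
    fun x => hbsub x.2
  choose e₀ he₀ using hchoice
  refine ⟨fun i => e₀ (ε i), ?_, ?_⟩
  · intro a b' hab
    have hab' : e₀ (ε a) = e₀ (ε b') := hab
    have hv2 : (ε a : Fin k → ℝ) = (ε b' : Fin k → ℝ) := by
      rw [← he₀ (ε a), ← he₀ (ε b'), hab']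
    exact ε.injective (Subtype.coe_injective hv2)
  · set M : Matrix (Fin k) (Fin k) ℝ := Matrix.of fun i j => v j (e₀ (ε i)) with hM
    have hrows : ∀ i, M i = (ε i : Fin k → ℝ) := by
      intro i
      funext j
      have := congrFun (he₀ (ε i)) j
      exact this
    have hli2 : LinearIndependent ℝ (fun i : Fin k => M i) := by
      have hfe : (fun i : Fin k => M i) = (fun x : b => (x : Fin k → ℝ)) ∘ ε :=
        funext fun i => hrows i
      rw [hfe]
      exact hbli.comp ε ε.injective
    have hunit : IsUnit M := Matrix.linearIndependent_rows_iff_isUnit.mp hli2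
    have hdet := (Matrix.isUnit_iff_isUnit_det M).mp hunit
    exact isUnit_iff_ne_zero.mp hdet

lemma exists_primitive_of_elementary {m : ℕ} {A : Matrix (Fin m) (Fin n) ℝ}
    (hA : A.IsTotallyUnimodular) {z : Fin n → ℝ}
    (hz : IsElementary (LinearMap.ker A.mulVecLin) z) {r : Fin n} (hzr : 0 < z r) :
    ∃ P : Fin n → ℝ, (∀ j, P j ∈ ({-1, 0, 1} : Set ℝ)) ∧ P r = 1 ∧ z = z r • P := by
  classical
  have hzr' : z r ≠ 0 := ne_of_gt hzr
  have hzker : A.mulVec z = 0 := by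
    have := hz.1
    rw [LinearMap.mem_ker] at this
    simpa [Matrix.mulVecLin_apply] using this
  set S' : Finset (Fin n) := (suppF z).erase r with hS'
  set k := S'.card with hk
  set gOI : Fin k ≃o {x // x ∈ S'} := S'.orderIsoOfFin rfl with hgOI
  set g : Fin k → Fin n := fun i => (gOI i : Fin n) with hg
  have hginj : Function.Injective g := fun a b hab => gOI.injective (Subtype.ext hab)
  have hgmem : ∀ i, g i ∈ S' := fun i => (gOI i).2
  have hgne_r : ∀ i, g i ≠ r := fun i => Finset.ne_of_mem_erase (hgmem i)
  have hgz : ∀ i, z (g i) ≠ 0 := fun i => mem_suppF.mp (Finset.mem_of_mem_erase (hgmem i))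
  have hsum : ∀ F : Fin n → ℝ, ∑ j ∈ S', F j = ∑ i, F (g i) := by
    intro F
    rw [← Finset.sum_coe_sort S' F, ← Equiv.sum_comp gOI.toEquiv (fun x : {x // x ∈ S'} => F ↑x)]
    rfl
  -- linear independence of the columns indexed by S'
  have hli : LinearIndependent ℝ (fun i : Fin k => fun x : Fin m => A x (g i)) := by
    rw [Fintype.linearIndependent_iff]
    intro d hd i₀
    by_contra hd₀
    set y : Fin n → ℝ := fun j => if h : j ∈ S' then d (gOI.symm ⟨j, h⟩) else 0 with hy
    have hyg : ∀ i, y (g i) = d i := by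
      intro i
      rw [hy]
      simp only [dif_pos (hgmem i)]
      congr 1
      have : (⟨g i, hgmem i⟩ : {x // x ∈ S'}) = gOI i := rfl
      rw [this, OrderIso.symm_apply_apply]
    have hyout : ∀ j, j ∉ S' → y j = 0 := by
      intro j hj
      rw [hy]
      simp [hj]
    have hyker : A.mulVec y = 0 := by
      funext x
      have hdx := congrFun hd x
      simp only [Finset.sum_apply, Pi.smul_apply, smul_eq_mul, Pi.zero_apply] at hdx
      show ∑ j, A x j * y j = 0
      rw [← Finset.sum_subset (Finset.subset_univ S')
        (fun j _ hj => by rw [hyout j hj, mul_zero])]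
      rw [hsum (fun j => A x j * y j)]
      rw [← hdx]
      apply Finset.sum_congr rfl
      intro i _
      rw [hyg i]
      ring
    have hy0 : y ≠ 0 := by
      intro h
      apply hd₀
      rw [← hyg i₀, h]
      rfl
    apply hz.2.2 y (by rw [LinearMap.mem_ker]; simpa [Matrix.mulVecLin_apply] using hyker) hy0
    have hsubset : supp y ⊆ supp z := by
      intro j hj
      simp only [supp, Set.mem_setOf_eq] at hj ⊢
      intro hzj
      apply hj
      apply hyout
      intro hmem
      exact mem_suppF.mp (Finset.mem_of_mem_erase hmem) hzj
    rw [Set.ssubset_iff_of_subset hsubset]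
    exact ⟨r, hzr', fun h => h (hyout r (Finset.notMem_erase r _))⟩
  obtain ⟨e, heinj, hdet⟩ := exists_rows hli
  set M : Matrix (Fin k) (Fin k) ℝ := A.submatrix e g with hM
  have hdetM : M.det ≠ 0 := hdet
  have hdet1 : M.det = 1 ∨ M.det = -1 := by
    obtain ⟨s, hs⟩ := hA k e g heinj hginj
    have hs' : (s : ℝ) = M.det := hs
    cases s with
    | zero => exact absurd hs'.symm (by simpa using hdetM)
    | pos => left; rw [← hs']; rfl
    | neg => right; rw [← hs']; rfl
  set bv : Fin k → ℝ := fun i => A (e i) r with hbv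
  set cvec : Fin k → ℝ := fun i => -z (g i) / z r with hcvec
  have hMc : M.mulVec cvec = bv := by
    funext x
    have h0 : ∑ j, A (e x) j * z j = 0 := by
      have := congrFun hzker (e x)
      simpa [Matrix.mulVec, dotProduct] using this
    have hrS : r ∉ S' := Finset.notMem_erase r _
    have hins : insert r S' = suppF z := by
      rw [hS', Finset.insert_erase (mem_suppF.mpr hzr')]
    have h1 : ∑ j ∈ insert r S', A (e x) j * z j = ∑ j, A (e x) j * z j := by
      apply Finset.sum_subset (Finset.subset_univ _)
      intro j _ hj
      rw [hins] at hj
      rw [mem_suppF, not_not] at hj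
      rw [hj, mul_zero]
    rw [Finset.sum_insert hrS] at h1
    have hsplit : ∑ j ∈ S', A (e x) j * z j = -(A (e x) r * z r) := by linarith
    show ∑ i, A (e x) (g i) * cvec i = bv x
    have hterm : ∀ i, A (e x) (g i) * cvec i
        = (A (e x) (g i) * z (g i)) * (-(z r)⁻¹) := by
      intro i
      rw [hcvec]
      field_simp
    rw [Finset.sum_congr rfl (fun i _ => hterm i), ← Finset.sum_mul,
      ← hsum (fun j => A (e x) j * z j), hsplit, hbv]
    field_simp
  have hunitdet : IsUnit M.det := isUnit_iff_ne_zero.mpr hdetM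
  have hinjM : Function.Injective M.mulVec :=
    Matrix.mulVec_injective_iff_isUnit.mpr ((Matrix.isUnit_iff_isUnit_det M).mpr hunitdet)
  have hc2 : cvec = M.det⁻¹ • M.cramer bv := by
    apply hinjM
    rw [hMc, Matrix.mulVec_smul, Matrix.mulVec_cramer, smul_smul,
      inv_mul_cancel₀ hdetM, one_smul]
  have hcval : ∀ i, cvec i ∈ ({-1, 0, 1} : Set ℝ) := by
    intro i
    have hup : M.updateCol i bv = A.submatrix e (Function.update g i r) := by
      ext x j
      rw [Matrix.updateCol_apply, Matrix.submatrix_apply, Function.update_apply]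
      split_ifs with h
      · rfl
      · rfl
    have hinj2 : Function.Injective (Function.update g i r) := by
      intro a b' hab
      rw [Function.update_apply, Function.update_apply] at hab
      split_ifs at hab with h1 h2 h2
      · rw [h1, h2]
      · exact absurd hab.symm (hgne_r b')
      · exact absurd hab (hgne_r a)
      · exact hginj hab
    obtain ⟨s', hs'⟩ := hA k e (Function.update g i r) heinj hinj2
    rw [← hup] at hs'
    have hval : cvec i = M.det⁻¹ * (M.updateCol i bv).det := by
      rw [hc2]
      simp [Matrix.cramer_apply]
    have hD : (M.updateCol i bv).det = -1 ∨ (M.updateCol i bv).det = 0 ∨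
        (M.updateCol i bv).det = 1 := by
      rw [← hs']
      cases s'
      · right; left; rfl
      · left; rfl
      · right; right; rfl
    rw [hval]
    rcases hdet1 with h | h <;> rcases hD with hD | hD | hD <;> rw [h, hD] <;>
      norm_num [Set.mem_insert_iff, Set.mem_singleton_iff]
  refine ⟨(z r)⁻¹ • z, ?_, ?_, ?_⟩
  · intro j
    by_cases hjr : j = r
    · subst hjr
      right; right
      show (z j)⁻¹ * z j = 1
      exact inv_mul_cancel₀ hzr'
    by_cases hjz : z j = 0
    · right; left
      show (z r)⁻¹ * z j = 0
      rw [hjz, mul_zero]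
    · have hjS : j ∈ S' := Finset.mem_erase.mpr ⟨hjr, mem_suppF.mpr hjz⟩
      obtain ⟨i, rfl⟩ : ∃ i, g i = j := ⟨gOI.symm ⟨j, hjS⟩, by
        have h5 : gOI (gOI.symm ⟨j, hjS⟩) = ⟨j, hjS⟩ := OrderIso.apply_symm_apply _ _
        exact congrArg Subtype.val h5⟩
      have hPg : (z r)⁻¹ * z (g i) = -(cvec i) := by
        rw [hcvec]
        field_simp
      show (z r)⁻¹ * z (g i) ∈ ({-1, 0, 1} : Set ℝ)
      rw [hPg]
      have h3 := hcval i
      simp only [Set.mem_insert_iff, Set.mem_singleton_iff] at h3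
      rcases h3 with h | h | h <;> simp [h]
  · show (z r)⁻¹ * z r = 1
    exact inv_mul_cancel₀ hzr'
  · rw [smul_smul, mul_inv_cancel₀ hzr', one_smul]

end AuxiliaryLemmas

theorem stmt4 (V : Submodule ℝ (Fin n → ℝ)) (hV : IsRegularSpace V)
    (r : Fin n) (c : Fin n → ℝ) (hc : ∀ j, j ≠ r → 0 ≤ c j)
    (f : Fin n → ℝ) (hfV : f ∈ V) (hf : Feasible c r f) :
    (∀ f' ∈ V, Feasible c r f' → f' r ≤ f r) ↔
      ¬ ∃ P, Augmenting V c r f P := by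
  classical
  constructor
  · -- maximal ⟹ no augmenting path
    rintro hmax ⟨P, ⟨⟨⟨hPV, -, -⟩, -⟩, hPr⟩, ε, hε, hfeas⟩
    have hmem : f + ε • P ∈ V := V.add_mem hfV (V.smul_mem ε hPV)
    have := hmax (f + ε • P) hmem hfeas
    simp only [Pi.add_apply, Pi.smul_apply, smul_eq_mul, hPr, mul_one] at this
    linarith
  · -- no augmenting path ⟹ maximal
    intro hnoaug f' hf'V hf'feas
    by_contra hgt
    push_neg at hgt
    apply hnoaug
    -- the difference is a flow with positive value at r
    set gd : Fin n → ℝ := f' - f with hgd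
    have hgdV : gd ∈ V := V.sub_mem hf'V hfV
    have hgdr : 0 < gd r := by
      show 0 < f' r - f r
      linarith
    obtain ⟨z, hzel, hzconf, hzr⟩ := exists_elementary_conforms hgdV hgdr
    obtain ⟨m, A, hA, hVA⟩ := hV
    rw [hVA] at hzel
    obtain ⟨P, hPval, hPr, hzP⟩ := exists_primitive_of_elementary hA hzel hzr
    have hzr' : z r ≠ 0 := ne_of_gt hzr
    have hPz : P = (z r)⁻¹ • z := by
      have h4 := congrArg (fun w => (z r)⁻¹ • w) hzP
      rw [smul_smul, inv_mul_cancel₀ hzr', one_smul] at h4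
      exact h4.symm
    have hPel : IsElementary (LinearMap.ker A.mulVecLin) P := by
      rw [hPz]
      exact hzel.smul_elem (inv_ne_zero hzr')
    have hPV : P ∈ V := by rw [hVA]; exact hPel.1
    have hPelV : IsElementary V P := by
      rw [hVA]; exact hPel
    -- P conforms to gd
    have hPconf : ∀ j, P j ≠ 0 → 0 < P j * gd j := by
      intro j hPj
      have hzj : z j ≠ 0 := by
        rw [hPz] at hPj
        simp only [Pi.smul_apply, smul_eq_mul, mul_ne_zero_iff] at hPj
        exact hPj.2
      have h1 := hzconf j hzj
      have h2 : 0 < P j * z j := by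
        rw [hPz]
        simp only [Pi.smul_apply, smul_eq_mul]
        have : (z r)⁻¹ * z j * z j = (z r)⁻¹ * (z j * z j) := by ring
        rw [this]
        exact mul_pos (inv_pos.mpr hzr) (mul_self_pos.mpr hzj)
      exact sign_trans h2 h1
    refine ⟨P, ⟨⟨hPelV, hPval⟩, hPr⟩, ?_⟩
    -- choose the augmentation amount
    set h : Fin n → ℝ := fun j =>
      if j ≠ r ∧ P j ≠ 0 then (if 0 < P j then c j - f j else f j) else 1 with hh
    have hhpos : ∀ j, 0 < h j := by
      intro j
      show 0 < if j ≠ r ∧ P j ≠ 0 then (if 0 < P j then c j - f j else f j) else 1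
      split_ifs with h1 h2
      · obtain ⟨hjr, hPj⟩ := h1
        have hconf := hPconf j hPj
        have hgdj : 0 < gd j := by
          rcases mul_pos_iff.mp hconf with ⟨_, h3⟩ | ⟨h3, _⟩
          · exact h3
          · linarith
        have : f j < f' j := by
          have : gd j = f' j - f j := rfl
          linarith
        have := (hf'feas j hjr).2
        linarith
      · obtain ⟨hjr, hPj⟩ := h1
        have hconf := hPconf j hPj
        have hPneg : P j < 0 := lt_of_le_of_ne (not_lt.mp h2) hPj
        have hgdj : gd j < 0 := by
          rcases mul_pos_iff.mp hconf with ⟨h3, _⟩ | ⟨_, h3⟩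
          · linarith
          · exact h3
        have : f' j < f j := by
          have : gd j = f' j - f j := rfl
          linarith
        have := (hf'feas j hjr).1
        linarith
      · norm_num
    set ε : ℝ := Finset.univ.inf' ⟨r, Finset.mem_univ r⟩ h with hε
    have hεpos : 0 < ε := by
      obtain ⟨j₀, -, hj₀⟩ := Finset.exists_mem_eq_inf' (⟨r, Finset.mem_univ r⟩ : (Finset.univ : Finset (Fin n)).Nonempty) h
      rw [hε, hj₀]; exact hhpos j₀
    have hεle : ∀ j, ε ≤ h j := fun j => Finset.inf'_le h (Finset.mem_univ j)
    refine ⟨ε, hεpos, ?_⟩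
    intro j hjr
    simp only [Pi.add_apply, Pi.smul_apply, smul_eq_mul]
    obtain ⟨hf1, hf2⟩ := hf j hjr
    have hP3 := hPval j
    simp only [Set.mem_insert_iff, Set.mem_singleton_iff] at hP3
    rcases hP3 with hP | hP | hP
    · -- P j = -1
      have hle : ε ≤ if j ≠ r ∧ P j ≠ 0 then (if 0 < P j then c j - f j else f j) else 1 :=
        hεle j
      rw [if_pos ⟨hjr, by rw [hP]; norm_num⟩] at hle
      rw [if_neg (by rw [hP]; norm_num)] at hle
      constructor
      · rw [hP]; linarith
      · rw [hP]; linarith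
    · -- P j = 0
      rw [hP]
      constructor <;> linarith
    · -- P j = 1
      have hle : ε ≤ if j ≠ r ∧ P j ≠ 0 then (if 0 < P j then c j - f j else f j) else 1 :=
        hεle j
      rw [if_pos ⟨hjr, by rw [hP]; norm_num⟩] at hle
      rw [if_pos (by rw [hP]; norm_num)] at hle
      constructor
      · rw [hP]; linarith
      · rw [hP]; linarith
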